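/- Let A be a finite group of odd order acting by automorphisms on a finite 2-group P. If A fixes (centralizes) every element of order 2 and every element of order 4 in P, then A acts trivially on P. -/

import Mathlib

section Helpers

variable {G : Type*} [Group G]

/-- If an automorphism maps a generating set into the closure, it maps the closure into itself. -/
lemma closure_inv_aux (e : G ≃* G) (S : Set G)
    (h : ∀ x ∈ S, e x ∈ Subgroup.closure S) :
    ∀ x ∈ Subgroup.closure S, e x ∈ Subgroup.closure S := by
  intro x hx
  have hle : Subgroup.closure S ≤ (Subgroup.closure S).comap (e : G →* G) :=
    (Subgroup.closure_le _).2 h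
  exact hle hx

lemma mulaut_pow_succ_apply (α : MulAut G) (k : ℕ) (x : G) :
    (α ^ (k + 1)) x = (α ^ k) (α x) := by
  rw [pow_succ]; rfl

lemma mulaut_pow_formula (α : MulAut G) (g z : G) (hg : α g = g * z) (hz : α z = z) :
    ∀ k : ℕ, (α ^ k) g = g * z ^ k := by
  intro k
  induction k with
  | zero => simp
  | succ k ih =>
    rw [pow_succ']
    show α ((α ^ k) g) = _
    rw [ih, map_mul, hg, map_pow, hz, pow_succ', mul_assoc]

end Helpers

universe u

theorem aux_thm : ∀ (n : ℕ) (P : Type u) [Group P] [Finite P] (q : ℕ),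
    q.Prime → q ≠ 2 → ∀ (α : MulAut P), Nat.card P = n → IsPGroup 2 P → α ^ q = 1 →
    (∀ x : P, orderOf x = 2 ∨ orderOf x = 4 → α x = x) → α = 1 := by
  intro n
  induction n using Nat.strong_induction_on with
  | _ n IH =>
  intro P _ _ q hq hq2 α hcard hP hαq hfix
  by_contra hα
  -- basic: elements of P killed by q-th power are trivial
  have ord_kill : ∀ z : P, z ^ q = 1 → z = 1 := by
    intro z hz
    obtain ⟨k, hk⟩ := hP z
    have h1 : orderOf z ∣ q := orderOf_dvd_of_pow_eq_one hz
    have h2 : orderOf z ∣ 2 ^ k := orderOf_dvd_of_pow_eq_one hk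
    have hcop : Nat.Coprime q (2 ^ k) :=
      Nat.Coprime.pow_right k ((Nat.coprime_primes hq Nat.prime_two).2 hq2)
    have h3 : orderOf z ∣ 1 := hcop ▸ Nat.dvd_gcd h1 h2
    exact orderOf_eq_one_iff.mp (Nat.dvd_one.mp h3)
  -- if α g = g * z with z fixed, then α g = g
  have key : ∀ g z : P, α g = g * z → α z = z → α g = g := by
    intro g z hg hz
    have h1 : (α ^ q) g = g := by rw [hαq]; rfl
    have h2 : g * z ^ q = g := by rw [← mulaut_pow_formula α g z hg hz q, h1]
    have h3 : z ^ q = 1 := mul_left_cancel (a := g) (by rw [h2, mul_one])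
    rw [hg, ord_kill z h3, mul_one]
  -- Step 1: every proper α-invariant subgroup is pointwise fixed
  have step1 : ∀ H : Subgroup P, (∀ g ∈ H, α g ∈ H) → H ≠ ⊤ → ∀ g ∈ H, α g = g := by
    intro H hinv hne g hg
    have hpow : ∀ (k : ℕ) (x : P), x ∈ H → (α ^ k) x ∈ H := by
      intro k
      induction k with
      | zero => intro x hx; simpa using hx
      | succ k ih =>
        intro x hx
        rw [mulaut_pow_succ_apply]
        exact ih _ (hinv x hx)
    have hainv : α⁻¹ = α ^ (q - 1) := by
      have h1 : α ^ (q - 1) * α = 1 := by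
        rw [← pow_succ, Nat.sub_add_cancel hq.one_lt.le, hαq]
      exact inv_eq_of_mul_eq_one_left h1
    have hinv' : ∀ x ∈ H, α⁻¹ x ∈ H := by
      intro x hx
      rw [hainv]
      exact hpow _ _ hx
    let β : H ≃* H :=
      { toFun := fun x => ⟨α x, hinv x x.2⟩
        invFun := fun x => ⟨α⁻¹ x, hinv' x x.2⟩
        left_inv := fun x => Subtype.ext (by simp)
        right_inv := fun x => Subtype.ext (by simp)
        map_mul' := fun x y => Subtype.ext (by simp) }
    have hβcoe : ∀ (k : ℕ) (x : H), (((β ^ k) x : H) : P) = (α ^ k) (x : P) := by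
      intro k
      induction k with
      | zero => intro x; rfl
      | succ k ih =>
        intro x
        rw [mulaut_pow_succ_apply, mulaut_pow_succ_apply]
        exact ih (β x)
    have hβq : β ^ q = 1 := by
      apply MulEquiv.ext
      intro x
      apply Subtype.ext
      rw [show ((β ^ q : H ≃* H) x : P) = (α ^ q) (x : P) from hβcoe q x, hαq]
      rfl
    have hfixH : ∀ x : H, orderOf x = 2 ∨ orderOf x = 4 → β x = x := by
      intro x hx
      have hox : orderOf (x : P) = 2 ∨ orderOf (x : P) = 4 := by
        rwa [Subgroup.orderOf_coe]
      exact Subtype.ext (hfix _ hox)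
    have hcardH : Nat.card H < n := by
      rw [← hcard]
      refine lt_of_le_of_ne (Subgroup.card_le_card_group H) ?_
      intro h
      exact hne (Subgroup.eq_top_of_card_eq H h)
    have hβ1 : β = 1 := IH (Nat.card H) hcardH H q hq hq2 β rfl (hP.to_subgroup H) hβq hfixH
    have : β ⟨g, hg⟩ = ⟨g, hg⟩ := by rw [hβ1]; rfl
    exact congrArg Subtype.val this
  -- P is nontrivial
  have hPnt : Nontrivial P := by
    by_contra h
    have : Subsingleton P := not_nontrivial_iff_subsingleton.mp h
    exact hα (MulEquiv.ext fun x => Subsingleton.elim _ _)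
  -- Step 2: the subgroup generated by g⁻¹ * α g is all of P
  have hKinvS : ∀ x ∈ {x : P | ∃ g : P, x = g⁻¹ * α g},
      α x ∈ Subgroup.closure {x : P | ∃ g : P, x = g⁻¹ * α g} := by
    rintro x ⟨g, rfl⟩
    refine Subgroup.subset_closure ⟨α g, ?_⟩
    rw [map_mul, map_inv]
  have hK : Subgroup.closure {x : P | ∃ g : P, x = g⁻¹ * α g} = ⊤ := by
    by_contra hKne
    apply hα
    apply MulEquiv.ext
    intro g
    have hz : g⁻¹ * α g ∈ Subgroup.closure {x : P | ∃ g : P, x = g⁻¹ * α g} :=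
      Subgroup.subset_closure ⟨g, rfl⟩
    have hzfix := step1 _ (closure_inv_aux (α : P ≃* P) _ hKinvS) hKne _ hz
    exact key g _ (by rw [mul_inv_cancel_left]) hzfix
  -- Step 3: the subgroup generated by squares
  have hNinvS : ∀ x ∈ {x : P | ∃ g : P, x = g * g},
      α x ∈ Subgroup.closure {x : P | ∃ g : P, x = g * g} := by
    rintro x ⟨g, rfl⟩
    exact Subgroup.subset_closure ⟨α g, by rw [map_mul]⟩
  set N := Subgroup.closure {x : P | ∃ g : P, x = g * g} with hNdef
  -- N is proper
  have hNtop : N ≠ ⊤ := by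
    have : Fact (Nat.Prime 2) := ⟨Nat.prime_two⟩
    obtain ⟨m, hm⟩ := IsPGroup.iff_card.mp hP
    have hm1 : 1 ≤ m := by
      by_contra hm0
      have : m = 0 := by omega
      rw [this, pow_zero] at hm
      have := Finite.one_lt_card (α := P)
      omega
    obtain ⟨H, hH⟩ := Sylow.exists_subgroup_card_pow_prime (G := P) 2
      (n := m - 1) (by rw [hm]; exact pow_dvd_pow 2 (Nat.sub_le m 1))
    have hidx : H.index = 2 := by
      have h1 : Nat.card H * H.index = Nat.card P := Subgroup.card_mul_index H
      rw [hH, hm] at h1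
      have h2 : (2 : ℕ) ^ (m - 1) * 2 = 2 ^ m := by
        rw [← pow_succ, Nat.sub_add_cancel hm1]
      have h3 : 2 ^ (m - 1) * H.index = 2 ^ (m - 1) * 2 := by rw [h1, h2]
      exact Nat.eq_of_mul_eq_mul_left (pow_pos (by norm_num) _) h3
    intro hNT
    have hle : N ≤ H := (Subgroup.closure_le _).2 (by
      rintro x ⟨g, rfl⟩
      exact Subgroup.mul_self_mem_of_index_two hidx g)
    rw [hNT] at hle
    have : H = ⊤ := top_le_iff.mp hle
    rw [this, Subgroup.index_top] at hidx
    exact absurd hidx (by norm_num)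
  -- N is pointwise fixed by α
  have hNfix : ∀ x ∈ N, α x = x :=
    step1 N (closure_inv_aux (α : P ≃* P) _ hNinvS) hNtop
  -- N is normal (conjugates of squares)
  have hNnormal : ∀ (g : P), ∀ x ∈ N, g * x * g⁻¹ ∈ N := by
    intro g
    have := closure_inv_aux (MulAut.conj g : P ≃* P) {x : P | ∃ a : P, x = a * a} (by
      rintro x ⟨a, rfl⟩
      refine Subgroup.subset_closure ⟨g * a * g⁻¹, ?_⟩
      simp only [MulAut.conj_apply]
      group)
    intro x hx
    simpa only [MulAut.conj_apply] using this x hx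
  -- N is central
  have hNcentral : ∀ h ∈ N, ∀ g : P, g * h = h * g := by
    intro h hh
    have hcent : Subgroup.closure {x : P | ∃ g : P, x = g⁻¹ * α g}
        ≤ Subgroup.centralizer {h} := by
      refine (Subgroup.closure_le _).2 ?_
      rintro x ⟨g, rfl⟩
      rw [SetLike.mem_coe, Subgroup.mem_centralizer_iff]
      intro y hy
      have hy' : y = h := hy
      rw [hy']
      have hc1 : α (g * h * g⁻¹) = g * h * g⁻¹ := hNfix _ (hNnormal g h hh)
      rw [map_mul, map_mul, map_inv, hNfix h hh] at hc1
      have : (g⁻¹ * α g) * h = h * (g⁻¹ * α g) := by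
        calc (g⁻¹ * α g) * h = g⁻¹ * (α g * h * (α g)⁻¹) * α g := by group
          _ = g⁻¹ * (g * h * g⁻¹) * α g := by rw [hc1]
          _ = h * (g⁻¹ * α g) := by group
      exact this.symm
    intro g
    have hg : g ∈ Subgroup.centralizer {h} := hcent (by rw [hK]; trivial)
    have := Subgroup.mem_centralizer_iff.mp hg h rfl
    exact this.symm
  -- Final step
  have hex : ∃ a : P, α a ≠ a := by
    by_contra h
    push_neg at h
    exact hα (MulEquiv.ext fun x => (h x).trans rfl)
  obtain ⟨a, ha⟩ := hex
  set z := a⁻¹ * α a with hzdef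
  have hzne : z ≠ 1 := fun h => ha (inv_mul_eq_one.mp h).symm
  have haa : α (a * a) = a * a := hNfix _ (Subgroup.subset_closure ⟨a, rfl⟩)
  have hsq : α a * α a = a * a := by rw [← map_mul, haa]
  have haz : α a = a * z := (mul_inv_cancel_left a (α a)).symm
  have h5 : z * a * z = a := by
    apply mul_left_cancel (a := a)
    have h4 : (a * z) * (a * z) = a * a := by rw [← haz]; exact hsq
    rw [← h4]; group
  have hconj : a⁻¹ * z * a = z⁻¹ := by
    have h6 : z * a = a * z⁻¹ := mul_right_cancel (b := z) (by rw [h5]; group)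
    calc a⁻¹ * z * a = a⁻¹ * (z * a) := by group
      _ = a⁻¹ * (a * z⁻¹) := by rw [h6]
      _ = z⁻¹ := by group
  have hzz : z * z ∈ N := Subgroup.subset_closure ⟨z, rfl⟩
  have h7 : a⁻¹ * (z * z) * a = z * z := by
    have hc := hNcentral _ hzz a
    calc a⁻¹ * (z * z) * a = a⁻¹ * ((z * z) * a) := by group
      _ = a⁻¹ * (a * (z * z)) := by rw [← hc]
      _ = z * z := by group
  have h8 : a⁻¹ * (z * z) * a = z⁻¹ * z⁻¹ := by
    calc a⁻¹ * (z * z) * a = (a⁻¹ * z * a) * (a⁻¹ * z * a) := by group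
      _ = z⁻¹ * z⁻¹ := by rw [hconj]
  have h10 : z * z = z⁻¹ * z⁻¹ := by rw [← h7, h8]
  have h9 : z ^ 4 = 1 := by
    have h11 : (z * z) * (z * z) = 1 := by nth_rewrite 1 [h10]; group
    rw [show (z : P) ^ 4 = (z * z) * (z * z) from by simp [pow_succ, mul_assoc], h11]
  have hordz : orderOf z = 2 ∨ orderOf z = 4 := by
    have hdvd : orderOf z ∣ 2 ^ 2 := by
      rw [show (2 : ℕ) ^ 2 = 4 from by norm_num]
      exact orderOf_dvd_of_pow_eq_one h9
    have hne1 : orderOf z ≠ 1 := fun h => hzne (orderOf_eq_one_iff.mp h)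
    obtain ⟨k, hk2, hke⟩ := (Nat.dvd_prime_pow Nat.prime_two).mp hdvd
    interval_cases k
    · exact absurd (by simpa using hke) hne1
    · left; simpa using hke
    · right; simpa using hke
  have hfz : α z = z := hfix z hordz
  exact ha (key a z haz hfz)

theorem stmt7 {A P : Type*} [Group A] [Finite A] [Group P] [Finite P]
    (hA : Odd (Nat.card A)) (hP : IsPGroup 2 P) (φ : A →* MulAut P)
    (hfix : ∀ x : P, orderOf x = 2 ∨ orderOf x = 4 → ∀ a : A, φ a x = x) :
    ∀ a : A, φ a = 1 := by
  intro a
  by_contra hne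
  have hfinAut : Finite (MulAut P) :=
    Finite.of_injective (fun (e : MulAut P) => (e : P → P)) DFunLike.coe_injective
  set β := φ a with hβ
  have hdvd : orderOf β ∣ Nat.card A := (orderOf_map_dvd φ a).trans (orderOf_dvd_natCard a)
  have hodd : ¬ (2 ∣ orderOf β) := by
    intro h2
    have : (2 : ℕ) ∣ Nat.card A := h2.trans hdvd
    rw [Nat.odd_iff] at hA
    omega
  have hne1 : orderOf β ≠ 1 := fun h => hne (orderOf_eq_one_iff.mp h)
  obtain ⟨q, hqp, hqd⟩ := Nat.exists_prime_and_dvd hne1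
  have hq2 : q ≠ 2 := by
    intro h
    exact hodd (h ▸ hqd)
  have hβpos : 0 < orderOf β := orderOf_pos β
  set k := orderOf β / q with hk
  have hkq : k * q = orderOf β := Nat.div_mul_cancel hqd
  have hγq : (β ^ k) ^ q = 1 := by
    rw [← pow_mul, hkq, pow_orderOf_eq_one]
  have hγfix : ∀ x : P, orderOf x = 2 ∨ orderOf x = 4 → (β ^ k) x = x := by
    intro x hx
    have : β ^ k = φ (a ^ k) := by rw [map_pow]
    rw [this]
    exact hfix x hx (a ^ k)
  have hγ1 : β ^ k = 1 :=
    aux_thm (Nat.card P) P q hqp hq2 (β ^ k) rfl hP hγq hγfix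
  have hdk : orderOf β ∣ k := orderOf_dvd_iff_pow_eq_one.mpr hγ1
  have hkpos : 0 < k := Nat.div_pos (Nat.le_of_dvd hβpos hqd) (hqp.pos)
  have hle : orderOf β ≤ k := Nat.le_of_dvd hkpos hdk
  have hlt : k < orderOf β := Nat.div_lt_self hβpos hqp.one_lt
  omega
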